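/- Let O be a USO of the k-cube and let h ∈ [k]. Let U be the set of vertices in the upper h-facet incident to an upwards h-edge, and L the set of their neighbors in the lower h-facet. The orientation O' obtained by swapping the partial orientations induced on U and on L (mapping each u ∈ U to u⊕h ∈ L and vice versa, keeping all other edge orientations, including the h-edges themselves, unchanged) is again a USO. -/

import Mathlib

/-- The neighbor of `v` across the `i`-edge. -/
def flipV {k : ℕ} (v : Fin k → Bool) (i : Fin k) : Fin k → Bool :=
  Function.update v i (!(v i))

/-- The Szabó–Welzl condition: `O` is a unique sink orientation of the `k`-cube. -/
def IsUSO {k : ℕ} (O : (Fin k → Bool) → (Fin k → Bool)) : Prop :=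
  ∀ v w : Fin k → Bool, v ≠ w → ∃ i : Fin k, v i ≠ w i ∧ O v i = O w i

lemma flip_self {k : ℕ} (v : Fin k → Bool) (i : Fin k) : flipV v i i = !(v i) := by
  simp [flipV]

lemma flip_other {k : ℕ} (v : Fin k → Bool) (i j : Fin k) (hj : j ≠ i) :
    flipV v i j = v j := by
  simp [flipV, Function.update_of_ne hj]

lemma flipV_flip_flip {k : ℕ} (v : Fin k → Bool) (i : Fin k) : flipV (flipV v i) i = v := by
  funext j
  by_cases hj : j = i
  · subst hj; simp [flip_self]
  · rw [flip_other _ _ _ hj, flip_other _ _ _ hj]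

/-- The partial swap in dimension `h`: the partial orientations induced on the
vertices incident to upwards `h`-edges are exchanged between the two `h`-facets,
while all `h`-edges keep their orientation. -/
theorem stmt6 (k : ℕ) (O : (Fin k → Bool) → (Fin k → Bool))
    (hO : ∀ (v : Fin k → Bool) (i : Fin k), O v i = O (flipV v i) i)
    (hUSO : IsUSO O) (h : Fin k) :
    IsUSO (fun v i => if O v h = true ∧ i ≠ h then O (flipV v h) i else O v i) := by
  set σ : (Fin k → Bool) → (Fin k → Bool) := fun v => if O v h = true then flipV v h else v
    with hσdef
  have hσh : ∀ v, O (σ v) h = O v h := by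
    intro v
    by_cases hv : O v h = true
    · simp only [hσdef, hv, if_pos]
      rw [← hO v h]; exact hv
    · simp [hσdef, hv]
  have hO' : ∀ v i, (if O v h = true ∧ i ≠ h then O (flipV v h) i else O v i) = O (σ v) i := by
    intro v i
    by_cases hv : O v h = true
    · by_cases hi : i = h
      · subst hi
        simp only [hv, ne_eq, not_true_eq_false, and_false, if_false]
        rw [hσh v]; exact hv.symm
      · simp [hσdef, hv, hi]
    · simp [hσdef, hv]
  have hinj : ∀ v w, σ v = σ w → v = w := by
    intro v w hvw
    by_cases hv : O v h = true <;> by_cases hw : O w h = true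
    · simp only [hσdef, hv, hw, if_pos] at hvw
      have := congrArg (fun u => flipV u h) hvw
      simpa [flipV_flip_flip] using this
    · simp only [hσdef, hv, hw, if_pos, if_neg, Bool.not_eq_true] at hvw
      exfalso
      apply hw
      rw [← hvw, ← hO v h, hv]
    · simp only [hσdef, hv, hw, if_pos, if_neg, Bool.not_eq_true] at hvw
      exfalso
      apply hv
      rw [hvw, ← hO w h, hw]
    · simpa [hσdef, hv, hw] using hvw
  intro v w hvw
  obtain ⟨i, hne, heq⟩ := hUSO (σ v) (σ w) (fun e => hvw (hinj v w e))
  refine ⟨i, ?_, ?_⟩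
  · by_cases hi : i = h
    · subst hi
      have hOvw : O v i = O w i := by rw [← hσh v, ← hσh w, heq]
      by_cases hv : O v i = true
      · have hw : O w i = true := by rw [← hOvw, hv]
        simp only [hσdef, hv, hw, if_pos, flip_self] at hne
        intro e; apply hne; rw [e]
      · have hw : ¬ O w i = true := by rw [← hOvw]; exact hv
        simpa [hσdef, hv, hw] using hne
    · have h1 : σ v i = v i := by
        by_cases hv : O v h = true <;> simp [hσdef, hv, flip_other _ _ _ hi]
      have h2 : σ w i = w i := by
        by_cases hw : O w h = true <;> simp [hσdef, hw, flip_other _ _ _ hi]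
      rwa [h1, h2] at hne
  · simp only [hO']
    exact heq
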